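/- For each finite nonempty J ⊆ I let E_J : M_J → ℝ be a sublinear pre-expectation and Q_J := {μ_J ∈ M_J' : μ_J f ≤ E_J(f) for all f ∈ M_J}. Then the family (E_J) is consistent (E_K(f) = E_J(f∘pr_{JK})) if and only if the family (Q_J) is consistent (Q_J ∘ pr_{JK}^{-1} = Q_K for K ⊆ J). -/

import Mathlib

open Filter

/-- Projection `pr_{JK} : S^J → S^K` for `K ⊆ J`. -/
def projJK {I S : Type*} {J K : Finset I} (h : K ⊆ J) (x : ↥J → S) (k : ↥K) : S :=
  x ⟨k.1, h k.2⟩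

def IsLinftyF {Ω : Type*} [MeasurableSpace Ω] (X : Ω → ℝ) : Prop :=
  Measurable X ∧ ∃ C : ℝ, ∀ ω, |X ω| ≤ C

/-- Composition with `pr_{JK}` as a linear map `M_K →ₗ M_J`. -/
def compLM {I S : Type*} {J K : Finset I} (h : K ⊆ J)
    (MJ : Submodule ℝ ((↥J → S) → ℝ)) (MK : Submodule ℝ ((↥K → S) → ℝ))
    (hcomp : ∀ f ∈ MK, f ∘ projJK (S := S) h ∈ MJ) : MK →ₗ[ℝ] MJ where
  toFun f := ⟨(f : (↥K → S) → ℝ) ∘ projJK (S := S) h, hcomp f f.2⟩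
  map_add' f g := rfl
  map_smul' c f := rfl

/-- `Q_J = { μ_J ∈ M_J' : μ_J f ≤ E_J(f) for all f ∈ M_J }`. -/
def QsetOf {β : Type*} (M : Submodule ℝ (β → ℝ))
    (E : (β → ℝ) → ℝ) : Set (M →ₗ[ℝ] ℝ) :=
  {μ | (∃ C : ℝ, ∀ f : M, |μ f| ≤ C * ⨆ x, |(f : β → ℝ) x|) ∧
    ∀ f : M, μ f ≤ E (f : β → ℝ)}

lemma projJK_surj {I S : Type*} {J K : Finset I} (h : K ⊆ J) (hK : K.Nonempty) :
    Function.Surjective (projJK (S := S) h) := by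
  classical
  cases isEmpty_or_nonempty S with
  | inl hS =>
    intro y
    obtain ⟨k, hk⟩ := hK
    exact (IsEmpty.false (y ⟨k, hk⟩)).elim
  | inr hS =>
    intro y
    refine ⟨fun j => if hj : (j : I) ∈ K then y ⟨j, hj⟩ else Classical.arbitrary S, ?_⟩
    funext k
    simp [projJK]

lemma compLM_inj {I S : Type*} {J K : Finset I} (h : K ⊆ J)
    (MJ : Submodule ℝ ((↥J → S) → ℝ)) (MK : Submodule ℝ ((↥K → S) → ℝ))
    (hcomp : ∀ f ∈ MK, f ∘ projJK (S := S) h ∈ MJ) (hK : K.Nonempty) :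
    Function.Injective (compLM h MJ MK hcomp) := by
  intro f g hfg
  have hfg' : (f : (↥K → S) → ℝ) ∘ projJK (S := S) h
      = (g : (↥K → S) → ℝ) ∘ projJK (S := S) h := congrArg Subtype.val hfg
  ext y
  obtain ⟨x, rfl⟩ := projJK_surj h hK y
  exact congrFun hfg' x

/-- boundedness of any linear functional dominated by `E`. -/
lemma Qmem_of_le {β : Type*} (M : Submodule ℝ (β → ℝ))
    (hL : ∀ f ∈ M, ∃ C : ℝ, ∀ x, |f x| ≤ C)
    (hone : (fun _ : β => (1:ℝ)) ∈ M)
    (E : (β → ℝ) → ℝ)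
    (hmono : ∀ f ∈ M, ∀ g ∈ M, (∀ x, f x ≤ g x) → E f ≤ E g)
    (hcp : ∀ c : ℝ, E (fun _ => c) = c)
    (μ : M →ₗ[ℝ] ℝ) (hμ : ∀ f : M, μ f ≤ E (f : β → ℝ)) :
    (∃ C : ℝ, ∀ f : M, |μ f| ≤ C * ⨆ x, |(f : β → ℝ) x|) ∧
      ∀ f : M, μ f ≤ E (f : β → ℝ) := by
  refine ⟨⟨1, fun f => ?_⟩, hμ⟩
  obtain ⟨C, hC⟩ := hL f f.2
  set s := ⨆ x, |(f : β → ℝ) x| with hs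
  have hbdd : BddAbove (Set.range fun x => |(f : β → ℝ) x|) :=
    ⟨C, by rintro y ⟨x, rfl⟩; exact hC x⟩
  have hconst : (fun _ : β => s) ∈ M := by
    have := M.smul_mem s hone
    simpa [Pi.smul_def, smul_eq_mul] using this
  have h1 : E (f : β → ℝ) ≤ s := by
    have := hmono _ f.2 _ hconst (fun x => (le_abs_self _).trans (le_ciSup hbdd x))
    rwa [hcp] at this
  have h2 : E ((-f : M) : β → ℝ) ≤ s := by
    have := hmono _ (-f : M).2 _ hconst (fun x => ?_)
    · rwa [hcp] at this
    · have : ((-f : M) : β → ℝ) x = -(f : β → ℝ) x := rfl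
      rw [this]
      exact (neg_le_abs _).trans (le_ciSup hbdd x)
  rw [one_mul]
  rw [abs_le]
  constructor
  · have := (hμ (-f)).trans h2
    rw [map_neg] at this
    linarith
  · exact (hμ f).trans h1

/-- attainment: there is `μ ≤ E` with `μ g = E g`. -/
lemma exists_attain {β : Type*} (M : Submodule ℝ (β → ℝ))
    (E : (β → ℝ) → ℝ)
    (hcp : ∀ c : ℝ, E (fun _ => c) = c)
    (hsubadd : ∀ f ∈ M, ∀ g ∈ M, E (fun x => f x + g x) ≤ E f + E g)
    (hposhom : ∀ c : ℝ, 0 ≤ c → ∀ f ∈ M, E (fun x => c * f x) = c * E f)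
    (g : M) :
    ∃ μ : M →ₗ[ℝ] ℝ, (∀ f : M, μ f ≤ E (f : β → ℝ)) ∧ μ g = E (g : β → ℝ) := by
  have E0 : E ((0 : M) : β → ℝ) = 0 := by
    have : ((0 : M) : β → ℝ) = fun _ => (0:ℝ) := by funext x; rfl
    rw [this, hcp]
  have coe_smul : ∀ (c : ℝ) (x : M), ((c • x : M) : β → ℝ) = fun t => c * (x : β → ℝ) t := by
    intro c x; funext t; rfl
  have N_hom : ∀ c : ℝ, 0 < c → ∀ x : M, E ((c • x : M) : β → ℝ) = c * E (x : β → ℝ) := by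
    intro c hc x
    rw [coe_smul]
    exact hposhom c hc.le _ x.2
  have N_add : ∀ x y : M, E ((x + y : M) : β → ℝ) ≤ E (x : β → ℝ) + E (y : β → ℝ) := by
    intro x y
    have : ((x + y : M) : β → ℝ) = fun t => (x : β → ℝ) t + (y : β → ℝ) t := by funext t; rfl
    rw [this]
    exact hsubadd _ x.2 _ y.2
  have key : ∀ (c : ℝ) (x : M), c * E (x : β → ℝ) ≤ E ((c • x : M) : β → ℝ) := by
    intro c x
    rcases le_or_gt 0 c with hc | hc
    · rw [coe_smul]; rw [hposhom c hc _ x.2]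
    · have h1 := N_add (c • x) ((-c) • x)
      have h2 : ((c • x + (-c) • x : M) : β → ℝ) = ((0 : M) : β → ℝ) := by
        congr 1
        rw [← add_smul]
        simp
      rw [h2, E0] at h1
      have h3 : E (((-c) • x : M) : β → ℝ) = (-c) * E (x : β → ℝ) := by
        rw [coe_smul]; exact hposhom (-c) (by linarith) _ x.2
      rw [h3] at h1
      linarith
  by_cases hg : g = 0
  · subst hg
    have hcond : ∀ x : ((⟨⊥, 0⟩ : M →ₗ.[ℝ] ℝ)).domain,
        (⟨⊥, 0⟩ : M →ₗ.[ℝ] ℝ) x ≤ E ((x : M) : β → ℝ) := by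
      rintro ⟨x, hx⟩
      rw [Submodule.mem_bot] at hx
      subst hx
      have h0 : E ((0 : M) : β → ℝ) = 0 := E0
      simpa using h0.ge
    obtain ⟨μ, _, hle⟩ := exists_extension_of_le_sublinear
      (⟨⊥, 0⟩ : M →ₗ.[ℝ] ℝ) (fun x => E (x : β → ℝ)) N_hom N_add hcond
    exact ⟨μ, hle, by rw [map_zero, E0]⟩
  · have hcond : ∀ x : (LinearPMap.mkSpanSingleton (K := ℝ) (σ := RingHom.id ℝ) g (E (g : β → ℝ)) hg).domain,
        (LinearPMap.mkSpanSingleton (K := ℝ) (σ := RingHom.id ℝ) g (E (g : β → ℝ)) hg) x ≤ E ((x : M) : β → ℝ) := by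
      rintro ⟨x, hx⟩
      obtain ⟨c, rfl⟩ := Submodule.mem_span_singleton.1 hx
      have heq : (LinearPMap.mkSpanSingleton (K := ℝ) (σ := RingHom.id ℝ) g (E (g : β → ℝ)) hg) ⟨c • g, hx⟩
          = c • E (g : β → ℝ) := LinearPMap.mkSpanSingleton'_apply (R := ℝ) g (E (g : β → ℝ)) _ c hx
      rw [heq, smul_eq_mul]
      exact key c g
    obtain ⟨μ, hagree, hle⟩ := exists_extension_of_le_sublinear
      (LinearPMap.mkSpanSingleton (K := ℝ) (σ := RingHom.id ℝ) g (E (g : β → ℝ)) hg) (fun x => E (x : β → ℝ))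
      N_hom N_add hcond
    refine ⟨μ, hle, ?_⟩
    have := hagree ⟨g, Submodule.mem_span_singleton_self g⟩
    rwa [LinearPMap.mkSpanSingleton_apply] at this

theorem stmt16 {I S : Type*} [Nonempty I] [MeasurableSpace S]
    (M : ∀ J : Finset I, Submodule ℝ ((↥J → S) → ℝ))
    (hL : ∀ J : Finset I, ∀ f ∈ M J, IsLinftyF f)
    (hone : ∀ J : Finset I, (fun _ : ↥J → S => (1:ℝ)) ∈ M J)
    (hcomp : ∀ (J K : Finset I) (h : K ⊆ J), ∀ f ∈ M K,
      f ∘ projJK (S := S) h ∈ M J)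
    (E : ∀ J : Finset I, ((↥J → S) → ℝ) → ℝ)
    -- sublinear pre-expectations
    (hmono : ∀ J : Finset I, J.Nonempty → ∀ f ∈ M J, ∀ g ∈ M J,
      (∀ x, f x ≤ g x) → E J f ≤ E J g)
    (hcp : ∀ J : Finset I, J.Nonempty → ∀ c : ℝ, E J (fun _ : ↥J → S => c) = c)
    (hsubadd : ∀ J : Finset I, J.Nonempty → ∀ f ∈ M J, ∀ g ∈ M J,
      E J (fun x => f x + g x) ≤ E J f + E J g)
    (hposhom : ∀ J : Finset I, J.Nonempty → ∀ c : ℝ, 0 ≤ c → ∀ f ∈ M J,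
      E J (fun x => c * f x) = c * E J f) :
    -- consistency of `(E_J)` is equivalent to consistency of `(Q_J)`
    (∀ (J K : Finset I) (h : K ⊆ J), J.Nonempty → K.Nonempty →
      ∀ f ∈ M K, E K f = E J (f ∘ projJK (S := S) h)) ↔
    (∀ (J K : Finset I) (h : K ⊆ J), J.Nonempty → K.Nonempty →
      (fun μ : M J →ₗ[ℝ] ℝ => μ ∘ₗ compLM h (M J) (M K) (hcomp J K h)) ''
          QsetOf (M J) (E J) = QsetOf (M K) (E K)) := by
  constructor
  · intro hE J K h hJ hK
    set c := compLM h (M J) (M K) (hcomp J K h) with hc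
    apply Set.Subset.antisymm
    · rintro ν ⟨μ, hμ, rfl⟩
      have hle : ∀ f : M K, (μ ∘ₗ c) f ≤ E K (f : (↥K → S) → ℝ) := by
        intro f
        have h1 : μ (c f) ≤ E J ((c f : M J) : (↥J → S) → ℝ) := hμ.2 (c f)
        have h2 : ((c f : M J) : (↥J → S) → ℝ)
            = (f : (↥K → S) → ℝ) ∘ projJK (S := S) h := rfl
        rw [h2, ← hE J K h hJ hK _ f.2] at h1
        exact h1
      exact Qmem_of_le (M K) (fun f hf => (hL K f hf).2) (hone K) (E K)
        (hmono K hK) (hcp K hK) (μ ∘ₗ c) hle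
    · intro ν hν
      have hinj := compLM_inj h (M J) (M K) (hcomp J K h) hK
      set e := LinearEquiv.ofInjective c hinj with he
      have hcond : ∀ x : ((⟨LinearMap.range c, ν ∘ₗ e.symm.toLinearMap⟩ :
            (M J) →ₗ.[ℝ] ℝ)).domain,
          (⟨LinearMap.range c, ν ∘ₗ e.symm.toLinearMap⟩ : (M J) →ₗ.[ℝ] ℝ) x
            ≤ E J ((x : M J) : (↥J → S) → ℝ) := by
        rintro ⟨x, hx⟩
        show ν (e.symm ⟨x, hx⟩) ≤ E J (x : (↥J → S) → ℝ)
        have h1 : c (e.symm (⟨x, hx⟩ : LinearMap.range c)) = x :=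
          LinearEquiv.ofInjective_symm_apply (h := hinj) c (⟨x, hx⟩ : LinearMap.range c)
        have h2 : (x : (↥J → S) → ℝ)
            = ((e.symm (⟨x, hx⟩ : LinearMap.range c) : M K) : (↥K → S) → ℝ)
              ∘ projJK (S := S) h :=
          (congrArg (fun z : M J => (z : (↥J → S) → ℝ)) h1).symm
        rw [h2, ← hE J K h hJ hK _ (e.symm (⟨x, hx⟩ : LinearMap.range c)).2]
        exact hν.2 (e.symm ⟨x, hx⟩)
      have hNhom : ∀ r : ℝ, 0 < r → ∀ x : M J,
          E J ((r • x : M J) : (↥J → S) → ℝ) = r * E J ((x : M J) : (↥J → S) → ℝ) := by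
        intro r hr x
        have hx : ((r • x : M J) : (↥J → S) → ℝ)
            = fun t => r * ((x : M J) : (↥J → S) → ℝ) t := rfl
        rw [hx]
        exact hposhom J hJ r hr.le _ x.2
      have hNadd : ∀ x y : M J,
          E J ((x + y : M J) : (↥J → S) → ℝ)
            ≤ E J ((x : M J) : (↥J → S) → ℝ) + E J ((y : M J) : (↥J → S) → ℝ) := by
        intro x y
        have hx : ((x + y : M J) : (↥J → S) → ℝ)
            = fun t => (x : (↥J → S) → ℝ) t + (y : (↥J → S) → ℝ) t := rfl
        rw [hx]
        exact hsubadd J hJ _ x.2 _ y.2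
      obtain ⟨μ, hagree, hle⟩ := exists_extension_of_le_sublinear
        (⟨LinearMap.range c, ν ∘ₗ e.symm.toLinearMap⟩ : (M J) →ₗ.[ℝ] ℝ)
        (fun x => E J ((x : M J) : (↥J → S) → ℝ)) hNhom hNadd hcond
      refine ⟨μ, ?_, ?_⟩
      · exact Qmem_of_le (M J) (fun f hf => (hL J f hf).2) (hone J) (E J)
          (hmono J hJ) (hcp J hJ) μ hle
      · show μ ∘ₗ c = ν
        apply LinearMap.ext
        intro f
        have hmem : c f ∈ LinearMap.range c := LinearMap.mem_range_self c f
        have h1 := hagree ⟨c f, hmem⟩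
        have h2 : e.symm ⟨c f, hmem⟩ = f := by
          apply hinj
          rw [LinearEquiv.ofInjective_symm_apply]
        have h3 : (⟨LinearMap.range c, ν ∘ₗ e.symm.toLinearMap⟩ :
            (M J) →ₗ.[ℝ] ℝ) ⟨c f, hmem⟩ = ν (e.symm ⟨c f, hmem⟩) := rfl
        show μ (c f) = ν f
        exact (h1.trans h3).trans (congrArg ν h2)
  · intro hQ J K h hJ hK f hf
    set c := compLM h (M J) (M K) (hcomp J K h) with hc
    have hQJK := hQ J K h hJ hK
    have le1 : E K f ≤ E J (f ∘ projJK (S := S) h) := by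
      obtain ⟨ν, hνle, hνeq⟩ := exists_attain (M K) (E K) (hcp K hK)
        (hsubadd K hK) (hposhom K hK) ⟨f, hf⟩
      have hνQ : ν ∈ QsetOf (M K) (E K) :=
        Qmem_of_le (M K) (fun g hg => (hL K g hg).2) (hone K) (E K)
          (hmono K hK) (hcp K hK) ν hνle
      rw [← hQJK] at hνQ
      obtain ⟨μ, hμQ, hμν⟩ := hνQ
      have h1 : ν ⟨f, hf⟩ = μ (c ⟨f, hf⟩) := by rw [← hμν]; rfl
      have h2 : μ (c ⟨f, hf⟩) ≤ E J ((c ⟨f, hf⟩ : M J) : (↥J → S) → ℝ) :=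
        hμQ.2 (c ⟨f, hf⟩)
      have h3 : ((c ⟨f, hf⟩ : M J) : (↥J → S) → ℝ) = f ∘ projJK (S := S) h := rfl
      rw [h3] at h2
      calc E K f = ν ⟨f, hf⟩ := hνeq.symm
        _ = μ (c ⟨f, hf⟩) := h1
        _ ≤ E J (f ∘ projJK (S := S) h) := h2
    have le2 : E J (f ∘ projJK (S := S) h) ≤ E K f := by
      obtain ⟨μ, hμle, hμeq⟩ := exists_attain (M J) (E J) (hcp J hJ)
        (hsubadd J hJ) (hposhom J hJ) (c ⟨f, hf⟩)
      have hμQ : μ ∈ QsetOf (M J) (E J) :=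
        Qmem_of_le (M J) (fun g hg => (hL J g hg).2) (hone J) (E J)
          (hmono J hJ) (hcp J hJ) μ hμle
      have himg : μ ∘ₗ c ∈ QsetOf (M K) (E K) := by
        rw [← hQJK]; exact ⟨μ, hμQ, rfl⟩
      have h1 : (μ ∘ₗ c) ⟨f, hf⟩ ≤ E K f := himg.2 ⟨f, hf⟩
      have h2 : ((c ⟨f, hf⟩ : M J) : (↥J → S) → ℝ) = f ∘ projJK (S := S) h := rfl
      calc E J (f ∘ projJK (S := S) h) = μ (c ⟨f, hf⟩) := by rw [← h2, ← hμeq]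
        _ ≤ E K f := h1
    exact le_antisymm le1 le2
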